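/- arXiv:1809.08746 — 2 statements merged into one kernel-verified Lean document; each statement's English description precedes it below -/
import Mathlib

section
/- The nuclear norm is decomposable with respect to orthogonally aligned subspaces: if B₁ ∈ M(U,V) and B₂ ∈ N(U,V), then ‖B₁ + B₂‖_* = ‖B₁‖_* + ‖B₂‖_*. -/
open Matrix

noncomputable def singVals {p q : ℕ} (A : Matrix (Fin p) (Fin q) ℝ) : Fin q → ℝ :=
  fun i => Real.sqrt ((show (Aᵀ * A).IsHermitian by
    simpa [Matrix.conjTranspose_eq_transpose_of_trivial] using
      Matrix.isHermitian_conjTranspose_mul_self A).eigenvalues i)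

noncomputable def nuclearNorm {p q : ℕ} (A : Matrix (Fin p) (Fin q) ℝ) : ℝ :=
  ∑ i, singVals A i

/-- Column space of a matrix, as a subspace of Euclidean space. -/
noncomputable def colSpace {p q : ℕ} (B : Matrix (Fin p) (Fin q) ℝ) :
    Submodule ℝ (EuclideanSpace ℝ (Fin p)) :=
  LinearMap.range (Matrix.toEuclideanLin B)

/-- Row space of a matrix, as a subspace of Euclidean space. -/
noncomputable def rowSpace {p q : ℕ} (B : Matrix (Fin p) (Fin q) ℝ) :
    Submodule ℝ (EuclideanSpace ℝ (Fin q)) :=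
  LinearMap.range (Matrix.toEuclideanLin Bᵀ)


open scoped MatrixOrder in
/-- Square root of a positive semidefinite matrix (via the continuous functional calculus). -/
noncomputable def Matrix.PosSemidef.sqrt {n : ℕ} {M : Matrix (Fin n) (Fin n) ℝ}
    (_hM : M.PosSemidef) : Matrix (Fin n) (Fin n) ℝ :=
  CFC.sqrt M

open scoped MatrixOrder in
lemma Matrix.PosSemidef.posSemidef_sqrt {n : ℕ} {M : Matrix (Fin n) (Fin n) ℝ}
    (hM : M.PosSemidef) : hM.sqrt.PosSemidef :=
  Matrix.nonneg_iff_posSemidef.mp (CFC.sqrt_nonneg M)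

open scoped MatrixOrder in
lemma Matrix.PosSemidef.sqrt_mul_self {n : ℕ} {M : Matrix (Fin n) (Fin n) ℝ}
    (hM : M.PosSemidef) : hM.sqrt * hM.sqrt = M :=
  CFC.sqrt_mul_sqrt_self M (Matrix.nonneg_iff_posSemidef.mpr hM)

open scoped MatrixOrder in
lemma Matrix.PosSemidef.eq_sqrt_of_sq_eq {n : ℕ} {A B : Matrix (Fin n) (Fin n) ℝ}
    (hA : A.PosSemidef) (hB : B.PosSemidef) (h : A ^ 2 = B) : A = hB.sqrt :=
  (CFC.sqrt_unique (by rw [← sq]; exact h) (Matrix.nonneg_iff_posSemidef.mpr hA)).symm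

lemma prod_eq_zero_of_orth {p q r : ℕ}
    (V : Submodule ℝ (EuclideanSpace ℝ (Fin q)))
    (C₁ : Matrix (Fin q) (Fin p) ℝ) (C₂ : Matrix (Fin q) (Fin r) ℝ)
    (h1 : LinearMap.range (Matrix.toEuclideanLin C₁) ≤ V)
    (h2 : LinearMap.range (Matrix.toEuclideanLin C₂) ≤ Vᗮ) :
    C₁ᵀ * C₂ = 0 := by
  ext i j
  have hx : (Matrix.toEuclideanLin C₁) ((WithLp.equiv 2 _).symm (Pi.single i 1)) ∈ V :=
    h1 ⟨_, rfl⟩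
  have hy : (Matrix.toEuclideanLin C₂) ((WithLp.equiv 2 _).symm (Pi.single j 1)) ∈ Vᗮ :=
    h2 ⟨_, rfl⟩
  have hz := Submodule.inner_right_of_mem_orthogonal hx hy
  rw [PiLp.inner_apply] at hz
  simp only [WithLp.equiv_symm_apply, Matrix.toLpLin_apply, PiLp.toLp_apply, WithLp.ofLp_toLp,
    Matrix.mulVec_single, mul_one, RCLike.inner_apply, conj_trivial] at hz
  simpa [Matrix.mul_apply, Matrix.transpose_apply, mul_comm] using hz

open scoped MatrixOrder in
lemma trace_sqrt' {n : ℕ} {M : Matrix (Fin n) (Fin n) ℝ} (hM : M.PosSemidef) :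
    hM.sqrt.trace = ∑ i, Real.sqrt (hM.1.eigenvalues i) := by
  have hM' : (0 : Matrix (Fin n) (Fin n) ℝ) ≤ M := Matrix.nonneg_iff_posSemidef.mpr hM
  rw [Matrix.PosSemidef.sqrt, CFC.sqrt_eq_real_sqrt M hM', cfcₙ_eq_cfc, hM.1.cfc_eq,
    Matrix.IsHermitian.cfc, Unitary.conjStarAlgAut_apply, Matrix.trace_mul_cycle,
    Matrix.UnitaryGroup.star_mul_self, Matrix.one_mul,
    Matrix.trace_diagonal]
  simp [RCLike.ofReal_alg]

lemma eq_zero_of_trace_transpose_mul_self {m n : ℕ} (N : Matrix (Fin m) (Fin n) ℝ)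
    (h : (Nᵀ * N).trace = 0) : N = 0 := by
  have h' : ∑ i, ∑ j, N j i ^ 2 = 0 := by
    simpa [Matrix.trace, Matrix.diag, Matrix.mul_apply, sq] using h
  ext a b
  have h1 := (Finset.sum_eq_zero_iff_of_nonneg (fun i _ => Finset.sum_nonneg
    (fun j _ => sq_nonneg (N j i)))).mp h' b (Finset.mem_univ b)
  have h2 := (Finset.sum_eq_zero_iff_of_nonneg (fun j _ => sq_nonneg (N j b))).mp h1 a
    (Finset.mem_univ a)
  simpa using pow_eq_zero_iff (n := 2) (by norm_num) |>.mp h2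

lemma sqrt_mul_sqrt_eq_zero {n : ℕ} {S T : Matrix (Fin n) (Fin n) ℝ}
    (hS : S.PosSemidef) (hT : T.PosSemidef) (h : S * T = 0) :
    hS.sqrt * hT.sqrt = 0 := by
  have hSh : hS.sqrtᵀ = hS.sqrt := by
    have := hS.posSemidef_sqrt.1
    rwa [Matrix.IsHermitian, Matrix.conjTranspose_eq_transpose_of_trivial] at this
  have hTh : hT.sqrtᵀ = hT.sqrt := by
    have := hT.posSemidef_sqrt.1
    rwa [Matrix.IsHermitian, Matrix.conjTranspose_eq_transpose_of_trivial] at this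
  apply eq_zero_of_trace_transpose_mul_self
  have : (hS.sqrt * hT.sqrt)ᵀ * (hS.sqrt * hT.sqrt) = hT.sqrt * (S * hT.sqrt) := by
    rw [Matrix.transpose_mul, hSh, hTh]
    simp only [Matrix.mul_assoc]
    rw [← Matrix.mul_assoc hS.sqrt hS.sqrt, hS.sqrt_mul_self]
  rw [this, Matrix.trace_mul_comm, Matrix.mul_assoc, hT.sqrt_mul_self, h, Matrix.trace_zero]

lemma nuclearNorm_eq_trace_sqrt {p q : ℕ} (A : Matrix (Fin p) (Fin q) ℝ)
    (hA : (Aᵀ * A).PosSemidef) :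
    (∑ i, Real.sqrt ((Matrix.isHermitian_conjTranspose_mul_self A).eigenvalues i)) =
      hA.sqrt.trace := by
  rw [trace_sqrt' hA]; rfl

theorem nuclearNorm_decomposable' {p q : ℕ}
    (U : Submodule ℝ (EuclideanSpace ℝ (Fin p)))
    (V : Submodule ℝ (EuclideanSpace ℝ (Fin q)))
    (B₁ B₂ : Matrix (Fin p) (Fin q) ℝ)
    (h1row : LinearMap.range (Matrix.toEuclideanLin B₁ᵀ) ≤ V)
    (h1col : LinearMap.range (Matrix.toEuclideanLin B₁) ≤ U)
    (h2row : LinearMap.range (Matrix.toEuclideanLin B₂ᵀ) ≤ Vᗮ)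
    (h2col : LinearMap.range (Matrix.toEuclideanLin B₂) ≤ Uᗮ) :
    (∑ i, Real.sqrt ((Matrix.isHermitian_conjTranspose_mul_self (B₁ + B₂)).eigenvalues i)) =
    (∑ i, Real.sqrt ((Matrix.isHermitian_conjTranspose_mul_self B₁).eigenvalues i)) +
    (∑ i, Real.sqrt ((Matrix.isHermitian_conjTranspose_mul_self B₂).eigenvalues i)) := by
  have hcross1 : B₁ᵀ * B₂ = 0 := prod_eq_zero_of_orth U B₁ B₂ h1col h2col
  have hcross2 : B₂ᵀ * B₁ = 0 :=
    prod_eq_zero_of_orth Uᗮ B₂ B₁ h2col (h1col.trans (Submodule.le_orthogonal_orthogonal U))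
  have hrow12 : B₁ * B₂ᵀ = 0 := by
    have := prod_eq_zero_of_orth V B₁ᵀ B₂ᵀ h1row h2row
    rwa [Matrix.transpose_transpose] at this
  have hrow21 : B₂ * B₁ᵀ = 0 := by
    have : (B₁ * B₂ᵀ)ᵀ = 0 := by rw [hrow12, Matrix.transpose_zero]
    rwa [Matrix.transpose_mul, Matrix.transpose_transpose] at this
  have hS : (B₁ᵀ * B₁).PosSemidef := by
    simpa [Matrix.conjTranspose_eq_transpose_of_trivial] using
      Matrix.posSemidef_conjTranspose_mul_self B₁
  have hT : (B₂ᵀ * B₂).PosSemidef := by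
    simpa [Matrix.conjTranspose_eq_transpose_of_trivial] using
      Matrix.posSemidef_conjTranspose_mul_self B₂
  have hA : ((B₁ + B₂)ᵀ * (B₁ + B₂)).PosSemidef := by
    simpa [Matrix.conjTranspose_eq_transpose_of_trivial] using
      Matrix.posSemidef_conjTranspose_mul_self (B₁ + B₂)
  have hST : (B₁ᵀ * B₁) * (B₂ᵀ * B₂) = 0 := by
    calc (B₁ᵀ * B₁) * (B₂ᵀ * B₂) = B₁ᵀ * (B₁ * B₂ᵀ) * B₂ := by
          simp only [Matrix.mul_assoc]
      _ = 0 := by rw [hrow12, Matrix.mul_zero, Matrix.zero_mul]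
  have hTS : (B₂ᵀ * B₂) * (B₁ᵀ * B₁) = 0 := by
    calc (B₂ᵀ * B₂) * (B₁ᵀ * B₁) = B₂ᵀ * (B₂ * B₁ᵀ) * B₁ := by
          simp only [Matrix.mul_assoc]
      _ = 0 := by rw [hrow21, Matrix.mul_zero, Matrix.zero_mul]
  have hsq : (hS.sqrt + hT.sqrt) ^ 2 = (B₁ + B₂)ᵀ * (B₁ + B₂) := by
    rw [sq, Matrix.transpose_add]
    simp only [Matrix.add_mul, Matrix.mul_add, hS.sqrt_mul_self, hT.sqrt_mul_self,
      sqrt_mul_sqrt_eq_zero hS hT hST, sqrt_mul_sqrt_eq_zero hT hS hTS, hcross1, hcross2]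
  have huniq : hS.sqrt + hT.sqrt = hA.sqrt :=
    Matrix.PosSemidef.eq_sqrt_of_sq_eq (hS.posSemidef_sqrt.add hT.posSemidef_sqrt) hA hsq
  rw [nuclearNorm_eq_trace_sqrt _ hA, nuclearNorm_eq_trace_sqrt _ hS,
    nuclearNorm_eq_trace_sqrt _ hT, ← huniq, Matrix.trace_add]

/-- The nuclear norm is decomposable: if `B₁` has row space in `V` and column
space in `U`, while `B₂` has row space in `Vᗮ` and column space in `Uᗮ`, then
`‖B₁ + B₂‖_* = ‖B₁‖_* + ‖B₂‖_*`. -/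
theorem nuclearNorm_decomposable {p q : ℕ}
    (U : Submodule ℝ (EuclideanSpace ℝ (Fin p)))
    (V : Submodule ℝ (EuclideanSpace ℝ (Fin q)))
    (B₁ B₂ : Matrix (Fin p) (Fin q) ℝ)
    (h1row : rowSpace B₁ ≤ V) (h1col : colSpace B₁ ≤ U)
    (h2row : rowSpace B₂ ≤ Vᗮ) (h2col : colSpace B₂ ≤ Uᗮ) :
    nuclearNorm (B₁ + B₂) = nuclearNorm B₁ + nuclearNorm B₂ :=
  nuclearNorm_decomposable' U V B₁ B₂ h1row h1col h2row h2col
end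

section
/- Singular value thresholding solves the nuclear-norm proximal problem: given B₀ ∈ ℝ^{p×q} with singular value decomposition B₀ = U diag(s) Vᵀ and ω ≥ 0, the matrix B̂ = U diag((sᵢ − ω)₊) Vᵀ minimizes (1/2)‖B − B₀‖_F² + ω‖B‖_* over all B ∈ ℝ^{p×q}. -/
open Matrix

noncomputable def frobNorm {p q : ℕ} (A : Matrix (Fin p) (Fin q) ℝ) : ℝ :=
  Real.sqrt (∑ i, ∑ j, (A i j)^2)

section SVDHelpers

variable {p q k n : ℕ}

lemma dot_self_nonneg (x : Fin n → ℝ) : 0 ≤ x ⬝ᵥ x :=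
  Finset.sum_nonneg fun i _ => mul_self_nonneg (x i)

lemma iso_dot {U : Matrix (Fin p) (Fin k) ℝ} (hU : Uᵀ * U = 1)
    (x y : Fin k → ℝ) : (U *ᵥ x) ⬝ᵥ (U *ᵥ y) = x ⬝ᵥ y := by
  rw [dotProduct_mulVec, ← mulVec_transpose, mulVec_mulVec, hU, one_mulVec]

lemma eigen_package (A : Matrix (Fin p) (Fin q) ℝ) :
    ∃ v : Fin q → Fin q → ℝ,
      (∀ j j', v j ⬝ᵥ v j' = if j = j' then 1 else 0) ∧
      (∀ w : Fin q → ℝ, ∑ j, (w ⬝ᵥ v j)^2 = w ⬝ᵥ w) ∧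
      (∀ X Y : Matrix (Fin p) (Fin q) ℝ,
        Matrix.trace (Xᵀ * Y) = ∑ j, (X *ᵥ v j) ⬝ᵥ (Y *ᵥ v j)) ∧
      (∀ j j', (A *ᵥ v j) ⬝ᵥ (A *ᵥ v j') =
        if j = j' then singVals A j * singVals A j else 0) := by
  have hA : (Aᵀ * A).IsHermitian := by
    simpa [Matrix.conjTranspose_eq_transpose_of_trivial] using
      Matrix.isHermitian_conjTranspose_mul_self A
  set Q : Matrix (Fin q) (Fin q) ℝ := (hA.eigenvectorUnitary : Matrix (Fin q) (Fin q) ℝ) with hQdef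
  have hstar : star Q = Qᵀ := by
    rw [Matrix.star_eq_conjTranspose, Matrix.conjTranspose_eq_transpose_of_trivial]
  have hQQt : Q * Qᵀ = 1 := by
    rw [← hstar]; exact (Matrix.mem_unitaryGroup_iff).mp hA.eigenvectorUnitary.2
  have hQtQ : Qᵀ * Q = 1 := by
    rw [← hstar]; exact (Matrix.mem_unitaryGroup_iff').mp hA.eigenvectorUnitary.2
  set v : Fin q → Fin q → ℝ := fun j i => Q i j with hvdef
  have hvb : ∀ j, v j = ⇑(hA.eigenvectorBasis j) := by
    intro j; funext i
    simp [hvdef, hQdef, Matrix.IsHermitian.eigenvectorUnitary_apply]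
  -- orthonormality
  have horth : ∀ j j', v j ⬝ᵥ v j' = if j = j' then 1 else 0 := by
    intro j j'
    have := congrFun (congrFun hQtQ j) j'
    simpa [Matrix.mul_apply, Matrix.one_apply, dotProduct, hvdef] using this
  -- completeness
  have hcomp : ∀ w : Fin q → ℝ, ∑ j, (w ⬝ᵥ v j)^2 = w ⬝ᵥ w := by
    intro w
    have h1 : (Qᵀ *ᵥ w) ⬝ᵥ (Qᵀ *ᵥ w) = w ⬝ᵥ w := by
      have : (Qᵀ)ᵀ * Qᵀ = 1 := by rwa [transpose_transpose]
      exact iso_dot this w w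
    rw [← h1]
    simp only [dotProduct, mulVec, pow_two, hvdef]
    congr 1; funext j; congr 1 <;> · congr 1; funext i; simp [mul_comm, Matrix.transpose_apply]
  -- key: dot against mulVec
  have hdotmv : ∀ (M : Matrix (Fin q) (Fin q) ℝ) (j : Fin q),
      v j ⬝ᵥ (M *ᵥ v j) = (Qᵀ * (M * Q)) j j := by
    intro M j
    simp only [Matrix.mul_apply, mulVec, dotProduct, Matrix.transpose_apply, hvdef]
  have htr : ∀ X Y : Matrix (Fin p) (Fin q) ℝ,
      Matrix.trace (Xᵀ * Y) = ∑ j, (X *ᵥ v j) ⬝ᵥ (Y *ᵥ v j) := by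
    intro X Y
    have hterm : ∀ j, (X *ᵥ v j) ⬝ᵥ (Y *ᵥ v j) = v j ⬝ᵥ ((Xᵀ * Y) *ᵥ v j) := by
      intro j
      conv_rhs => rw [← mulVec_mulVec, dotProduct_mulVec, vecMul_transpose]
    simp_rw [hterm, hdotmv]
    rw [show ∑ j, (Qᵀ * ((Xᵀ * Y) * Q)) j j = Matrix.trace (Qᵀ * ((Xᵀ * Y) * Q)) from rfl]
    conv_rhs => rw [trace_mul_comm, mul_assoc, hQQt, mul_one]
  -- eigen equations
  have heig : ∀ j, (Aᵀ * A) *ᵥ v j = hA.eigenvalues j • v j := by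
    intro j; rw [hvb j]; exact hA.mulVec_eigenvectorBasis j
  have hAv : ∀ j j', (A *ᵥ v j) ⬝ᵥ (A *ᵥ v j') =
      if j = j' then hA.eigenvalues j else 0 := by
    intro j j'
    have : (A *ᵥ v j) ⬝ᵥ (A *ᵥ v j') = v j ⬝ᵥ ((Aᵀ * A) *ᵥ v j') := by
      conv_rhs => rw [← mulVec_mulVec, dotProduct_mulVec, vecMul_transpose]
    rw [this, heig j', dotProduct_smul, smul_eq_mul, horth]
    by_cases h : j = j' <;> simp [h]
  have hnn : ∀ j, 0 ≤ hA.eigenvalues j := by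
    intro j
    have h := hAv j j
    simp only [if_true, eq_self_iff_true] at h
    rw [← h]; exact dot_self_nonneg _
  refine ⟨v, horth, hcomp, htr, fun j j' => ?_⟩
  rw [hAv j j']
  by_cases h : j = j' <;> simp [h, singVals, Real.mul_self_sqrt (hnn j')]

lemma dot_cs (x y : Fin n → ℝ) :
    x ⬝ᵥ y ≤ Real.sqrt (x ⬝ᵥ x) * Real.sqrt (y ⬝ᵥ y) := by
  have h := Finset.sum_mul_sq_le_sq_mul_sq Finset.univ x y
  calc x ⬝ᵥ y ≤ |x ⬝ᵥ y| := le_abs_self _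
    _ = Real.sqrt ((x ⬝ᵥ y)^2) := (Real.sqrt_sq_eq_abs _).symm
    _ ≤ Real.sqrt ((∑ i, x i ^ 2) * (∑ i, y i ^ 2)) := Real.sqrt_le_sqrt h
    _ = Real.sqrt (x ⬝ᵥ x) * Real.sqrt (y ⬝ᵥ y) := by
        rw [Real.sqrt_mul (by positivity)]
        simp [dotProduct, pow_two]

lemma proj_le {V : Matrix (Fin q) (Fin k) ℝ} (hV : Vᵀ * V = 1)
    (v : Fin q → ℝ) : (Vᵀ *ᵥ v) ⬝ᵥ (Vᵀ *ᵥ v) ≤ v ⬝ᵥ v := by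
  set b := Vᵀ *ᵥ v with hb
  have h1 : v ⬝ᵥ (V *ᵥ b) = b ⬝ᵥ b := by
    rw [dotProduct_mulVec, ← mulVec_transpose]
  have h2 : (V *ᵥ b) ⬝ᵥ (V *ᵥ b) = b ⬝ᵥ b := iso_dot hV b b
  have h3 : (V *ᵥ b) ⬝ᵥ v = b ⬝ᵥ b := by rw [dotProduct_comm, h1]
  have h4 : 0 ≤ (v - V *ᵥ b) ⬝ᵥ (v - V *ᵥ b) := dot_self_nonneg _
  rw [sub_dotProduct, dotProduct_sub, dotProduct_sub, h1, h2, h3] at h4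
  linarith

/-- Operator-norm type bound for `U diag d Vᵀ`. -/
lemma opnorm_bound {ω : ℝ} (hω : 0 ≤ ω) {U : Matrix (Fin p) (Fin k) ℝ}
    {V : Matrix (Fin q) (Fin k) ℝ} (hU : Uᵀ * U = 1) (hV : Vᵀ * V = 1)
    {d : Fin k → ℝ} (hd : ∀ i, |d i| ≤ ω) (v : Fin q → ℝ) :
    ((U * diagonal d * Vᵀ) *ᵥ v) ⬝ᵥ ((U * diagonal d * Vᵀ) *ᵥ v) ≤ ω^2 * (v ⬝ᵥ v) := by
  set b := Vᵀ *ᵥ v with hb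
  set c := diagonal d *ᵥ b with hc
  have hW : (U * diagonal d * Vᵀ) *ᵥ v = U *ᵥ c := by
    rw [hc, hb, mulVec_mulVec, mulVec_mulVec]
  rw [hW, iso_dot hU]
  have h1 : c ⬝ᵥ c ≤ ω^2 * (b ⬝ᵥ b) := by
    rw [hc]
    simp only [dotProduct, mulVec_diagonal, Finset.mul_sum]
    apply Finset.sum_le_sum
    intro i _
    have := hd i
    nlinarith [mul_self_le_mul_self (abs_nonneg (d i)) this, abs_mul_abs_self (d i), sq_nonneg (b i)]
  have h2 : b ⬝ᵥ b ≤ v ⬝ᵥ v := proj_le hV v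
  nlinarith [dot_self_nonneg b]

/-- Nuclear norm dual bound. -/
lemma dual_bound {ω : ℝ} (hω : 0 ≤ ω) {U : Matrix (Fin p) (Fin k) ℝ}
    {V : Matrix (Fin q) (Fin k) ℝ} (hU : Uᵀ * U = 1) (hV : Vᵀ * V = 1)
    {d : Fin k → ℝ} (hd : ∀ i, |d i| ≤ ω) (B : Matrix (Fin p) (Fin q) ℝ) :
    Matrix.trace (Bᵀ * (U * diagonal d * Vᵀ)) ≤ ω * nuclearNorm B := by
  obtain ⟨v, horth, hcomp, htr, hsig⟩ := eigen_package B
  set W := U * diagonal d * Vᵀ with hWdef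
  rw [htr B W, nuclearNorm, Finset.mul_sum]
  apply Finset.sum_le_sum
  intro j _
  have h1 : (B *ᵥ v j) ⬝ᵥ (W *ᵥ v j) ≤
      Real.sqrt ((B *ᵥ v j) ⬝ᵥ (B *ᵥ v j)) * Real.sqrt ((W *ᵥ v j) ⬝ᵥ (W *ᵥ v j)) := dot_cs _ _
  have h2 : Real.sqrt ((B *ᵥ v j) ⬝ᵥ (B *ᵥ v j)) = singVals B j := by
    have := hsig j j
    rw [if_pos rfl] at this
    rw [this]
    exact Real.sqrt_mul_self (Real.sqrt_nonneg _)
  have h3 : Real.sqrt ((W *ᵥ v j) ⬝ᵥ (W *ᵥ v j)) ≤ ω := by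
    have hb := opnorm_bound hω hU hV hd (v j)
    have hv1 : v j ⬝ᵥ v j = 1 := by rw [horth, if_pos rfl]
    rw [hv1, mul_one] at hb
    calc Real.sqrt ((W *ᵥ v j) ⬝ᵥ (W *ᵥ v j)) ≤ Real.sqrt (ω^2) := Real.sqrt_le_sqrt hb
      _ = ω := by rw [Real.sqrt_sq hω]
  calc (B *ᵥ v j) ⬝ᵥ (W *ᵥ v j) ≤ _ := h1
    _ ≤ singVals B j * ω := by
        rw [h2]; exact mul_le_mul_of_nonneg_left h3 (by rw [← h2]; exact Real.sqrt_nonneg _)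
    _ = ω * singVals B j := mul_comm _ _

lemma dot_sum {m : ℕ} (x : Fin n → ℝ) (f : Fin m → Fin n → ℝ) :
    x ⬝ᵥ (∑ j, f j) = ∑ j, x ⬝ᵥ f j := by
  simp only [dotProduct, Finset.sum_apply, Finset.mul_sum]
  rw [Finset.sum_comm]

lemma sum_dot {m : ℕ} (f : Fin m → Fin n → ℝ) (x : Fin n → ℝ) :
    (∑ j, f j) ⬝ᵥ x = ∑ j, f j ⬝ᵥ x := by
  rw [dotProduct_comm, dot_sum]
  simp_rw [dotProduct_comm x]

lemma bessel {m : ℕ} (u : Fin m → Fin n → ℝ)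
    (horth : ∀ j j', j ≠ j' → u j ⬝ᵥ u j' = 0)
    (hself : ∀ j, u j ⬝ᵥ u j = 1 ∨ u j = 0)
    (x : Fin n → ℝ) (hx : x ⬝ᵥ x = 1) :
    ∑ j, (x ⬝ᵥ u j)^2 ≤ 1 := by
  set g : Fin m → ℝ := fun j => x ⬝ᵥ u j with hg
  set y : Fin n → ℝ := ∑ j, g j • u j with hy
  have hxy : x ⬝ᵥ y = ∑ j, g j ^ 2 := by
    rw [hy, dot_sum]
    apply Finset.sum_congr rfl
    intro j _
    rw [dotProduct_smul, smul_eq_mul, pow_two]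
  have huy : ∀ j, u j ⬝ᵥ y = g j * (u j ⬝ᵥ u j) := by
    intro j
    rw [hy, dot_sum]
    rw [Finset.sum_eq_single j]
    · rw [dotProduct_smul, smul_eq_mul]
    · intro j' _ hj'
      rw [dotProduct_smul, smul_eq_mul, horth j j' (Ne.symm hj'), mul_zero]
    · intro h; exact absurd (Finset.mem_univ j) h
  have hyy : y ⬝ᵥ y = ∑ j, g j ^ 2 := by
    rw [hy, sum_dot]
    apply Finset.sum_congr rfl
    intro j _
    rw [smul_dotProduct, smul_eq_mul, ← hy, huy j]
    rcases hself j with h | h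
    · rw [h, mul_one, pow_two]
    · have : g j = 0 := by rw [hg]; simp [h]
      rw [this]; ring
  have hxyc : y ⬝ᵥ x = ∑ j, g j ^ 2 := by rw [dotProduct_comm, hxy]
  have h4 : 0 ≤ (x - y) ⬝ᵥ (x - y) := dot_self_nonneg _
  rw [sub_dotProduct, dotProduct_sub, dotProduct_sub, hx, hxy, hxyc, hyy] at h4
  linarith

lemma nuclear_le {U : Matrix (Fin p) (Fin k) ℝ} {V : Matrix (Fin q) (Fin k) ℝ}
    (hU : Uᵀ * U = 1) (hV : Vᵀ * V = 1) {t : Fin k → ℝ} (ht : ∀ i, 0 ≤ t i) :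
    nuclearNorm (U * diagonal t * Vᵀ) ≤ ∑ i, t i := by
  set A := U * diagonal t * Vᵀ with hAdef
  obtain ⟨v, horth, hcomp, htr, hsig⟩ := eigen_package A
  set σ : Fin q → ℝ := singVals A with hσdef
  have hσnn : ∀ j, 0 ≤ σ j := fun j => Real.sqrt_nonneg _
  set u : Fin q → Fin p → ℝ := fun j => (σ j)⁻¹ • (A *ᵥ v j) with hu
  have hAv0 : ∀ j, σ j = 0 → A *ᵥ v j = 0 := by
    intro j h
    have := hsig j j
    rw [if_pos rfl, h, mul_zero] at this
    exact dotProduct_self_eq_zero.mp this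
  have hu_orth : ∀ j j', j ≠ j' → u j ⬝ᵥ u j' = 0 := by
    intro j j' hne
    rw [hu]
    simp only [smul_dotProduct, dotProduct_smul, smul_eq_mul]
    rw [hsig j j', if_neg hne]
    ring
  have hu_self : ∀ j, u j ⬝ᵥ u j = 1 ∨ u j = 0 := by
    intro j
    by_cases h : σ j = 0
    · right; rw [hu]; simp [hAv0 j h]
    · left
      rw [hu]
      simp only [smul_dotProduct, dotProduct_smul, smul_eq_mul]
      rw [hsig j j, if_pos rfl]
      field_simp
  have hu_dot : ∀ j, u j ⬝ᵥ (A *ᵥ v j) = σ j := by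
    intro j
    rw [hu]
    simp only [smul_dotProduct, smul_eq_mul]
    rw [hsig j j, if_pos rfl]
    by_cases h : σ j = 0
    · rw [h]; ring
    · field_simp
  -- column vectors
  set a : Fin k → Fin q → ℝ := fun i j => (Uᵀ *ᵥ u j) i with ha
  set b : Fin k → Fin q → ℝ := fun i j => (Vᵀ *ᵥ v j) i with hb
  have key : ∀ j, σ j = ∑ i, a i j * (t i * b i j) := by
    intro j
    rw [← hu_dot j]
    have h1 : A *ᵥ v j = U *ᵥ (diagonal t *ᵥ (Vᵀ *ᵥ v j)) := by
      rw [hAdef, mulVec_mulVec, mulVec_mulVec]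
    rw [h1, dotProduct_mulVec, ← mulVec_transpose]
    apply Finset.sum_congr rfl
    intro i _
    rw [ha, hb, mulVec_diagonal]
  have hbnd : ∀ i, ∑ j, a i j * b i j ≤ 1 := by
    intro i
    have ha2 : ∑ j, (a i j)^2 ≤ 1 := by
      have hcol : (fun l => U l i) ⬝ᵥ (fun l => U l i) = 1 := by
        have := congrFun (congrFun hU i) i
        simpa [Matrix.mul_apply, dotProduct, Matrix.one_apply] using this
      have := bessel u hu_orth hu_self (fun l => U l i) hcol
      calc ∑ j, (a i j)^2 = ∑ j, ((fun l => U l i) ⬝ᵥ u j)^2 := by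
            apply Finset.sum_congr rfl
            intro j _
            congr 1
        _ ≤ 1 := this
    have hb2 : ∑ j, (b i j)^2 = 1 := by
      have hcol : (fun l => V l i) ⬝ᵥ (fun l => V l i) = 1 := by
        have := congrFun (congrFun hV i) i
        simpa [Matrix.mul_apply, dotProduct, Matrix.one_apply] using this
      rw [← hcol]
      rw [← hcomp (fun l => V l i)]
      apply Finset.sum_congr rfl
      intro j _
      congr 1
    have hcs := Finset.sum_mul_sq_le_sq_mul_sq Finset.univ (a i) (b i)
    have h1 : (∑ j, a i j * b i j)^2 ≤ 1 := by
      calc (∑ j, a i j * b i j)^2 ≤ (∑ j, a i j ^2) * (∑ j, b i j^2) := hcs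
        _ ≤ 1 := by rw [hb2, mul_one]; exact ha2
    nlinarith [h1]
  calc nuclearNorm A = ∑ j, σ j := rfl
    _ = ∑ j, ∑ i, a i j * (t i * b i j) := Finset.sum_congr rfl fun j _ => key j
    _ = ∑ i, ∑ j, a i j * (t i * b i j) := by rw [Finset.sum_comm]
    _ = ∑ i, t i * ∑ j, a i j * b i j := by
        apply Finset.sum_congr rfl
        intro i _
        rw [Finset.mul_sum]
        apply Finset.sum_congr rfl
        intro j _
        ring
    _ ≤ ∑ i, t i * 1 := Finset.sum_le_sum fun i _ =>
        mul_le_mul_of_nonneg_left (hbnd i) (ht i)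
    _ = ∑ i, t i := by simp

lemma frob_sq (X : Matrix (Fin p) (Fin q) ℝ) :
    (frobNorm X)^2 = Matrix.trace (Xᵀ * X) := by
  rw [frobNorm, Real.sq_sqrt (Finset.sum_nonneg fun i _ => Finset.sum_nonneg fun j _ => sq_nonneg (X i j))]
  simp only [Matrix.trace, Matrix.diag, Matrix.mul_apply, Matrix.transpose_apply, pow_two]
  rw [Finset.sum_comm]

lemma trace_tm_nonneg (X : Matrix (Fin p) (Fin q) ℝ) : 0 ≤ Matrix.trace (Xᵀ * X) := by
  simp only [Matrix.trace, Matrix.diag, Matrix.mul_apply, Matrix.transpose_apply]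
  exact Finset.sum_nonneg fun j _ => Finset.sum_nonneg fun i _ => mul_self_nonneg _

lemma trace_prod {U : Matrix (Fin p) (Fin k) ℝ} {V : Matrix (Fin q) (Fin k) ℝ}
    (hU : Uᵀ * U = 1) (hV : Vᵀ * V = 1) (a b : Fin k → ℝ) :
    Matrix.trace ((U * diagonal a * Vᵀ)ᵀ * (U * diagonal b * Vᵀ)) = ∑ i, a i * b i := by
  have h1 : (U * diagonal a * Vᵀ)ᵀ = V * (diagonal a * Uᵀ) := by
    rw [transpose_mul, transpose_mul, diagonal_transpose, transpose_transpose]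
  rw [h1]
  have h2 : V * (diagonal a * Uᵀ) * (U * diagonal b * Vᵀ)
      = V * (diagonal (fun i => a i * b i) * Vᵀ) := by
    rw [show V * (diagonal a * Uᵀ) * (U * diagonal b * Vᵀ)
        = V * (diagonal a * ((Uᵀ * U) * (diagonal b * Vᵀ))) by
      simp only [Matrix.mul_assoc]]
    rw [hU, Matrix.one_mul, ← Matrix.mul_assoc (diagonal a), diagonal_mul_diagonal]
  rw [h2, trace_mul_comm, Matrix.mul_assoc, hV, Matrix.mul_one, trace_diagonal]

lemma trace_symm (X Y : Matrix (Fin p) (Fin q) ℝ) :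
    Matrix.trace (Xᵀ * Y) = Matrix.trace (Yᵀ * X) := by
  rw [← trace_transpose, transpose_mul, transpose_transpose]

end SVDHelpers

/-- Singular value thresholding: if `B₀ = U diag(s) Vᵀ` is a singular value
decomposition (orthonormal columns of `U` and `V`, nonnegative `s`), then
`B̂ = U diag((sᵢ − ω)₊) Vᵀ` minimizes `(1/2)‖B − B₀‖_F² + ω‖B‖_*`. -/
theorem svd_thresholding_minimizes {p q k : ℕ} (ω : ℝ) (hω : 0 ≤ ω)
    (U : Matrix (Fin p) (Fin k) ℝ) (V : Matrix (Fin q) (Fin k) ℝ)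
    (s : Fin k → ℝ) (hs : ∀ i, 0 ≤ s i)
    (hU : Uᵀ * U = 1) (hV : Vᵀ * V = 1)
    (B₀ : Matrix (Fin p) (Fin q) ℝ)
    (hB₀ : B₀ = U * Matrix.diagonal s * Vᵀ)
    (Bhat : Matrix (Fin p) (Fin q) ℝ)
    (hBhat : Bhat = U * Matrix.diagonal (fun i => max (s i - ω) 0) * Vᵀ) :
    ∀ B : Matrix (Fin p) (Fin q) ℝ,
      (1/2) * (frobNorm (Bhat - B₀))^2 + ω * nuclearNorm Bhat ≤
      (1/2) * (frobNorm (B - B₀))^2 + ω * nuclearNorm B := by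
  intro B
  set t : Fin k → ℝ := fun i => max (s i - ω) 0 with htdef
  set D : Fin k → ℝ := fun i => min (s i) ω with hDdef
  set E : Matrix (Fin p) (Fin q) ℝ := U * diagonal D * Vᵀ with hEdef
  have hE : B₀ - Bhat = E := by
    rw [hB₀, hBhat, hEdef, ← Matrix.sub_mul, ← Matrix.mul_sub, diagonal_sub]
    suffices h : (fun i => s i - t i) = D by rw [h]
    funext i
    show s i - max (s i - ω) 0 = min (s i) ω
    rcases le_total (s i) ω with h | h
    · rw [max_eq_right (by linarith), min_eq_left h, sub_zero]
    · rw [max_eq_left (by linarith), min_eq_right h]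
      ring
  have hD : ∀ i, |D i| ≤ ω := by
    intro i
    rw [hDdef, abs_of_nonneg (le_min (hs i) hω)]
    exact min_le_right _ _
  have h1 : Matrix.trace (Bᵀ * E) ≤ ω * nuclearNorm B := dual_bound hω hU hV hD B
  have h2 : Matrix.trace (Bhatᵀ * E) = ω * ∑ i, t i := by
    rw [hBhat, hEdef, trace_prod hU hV, Finset.mul_sum]
    apply Finset.sum_congr rfl
    intro i _
    show t i * D i = ω * t i
    rcases le_total (s i) ω with h | h
    · have ht0 : t i = 0 := max_eq_right (by linarith)
      rw [ht0]; ring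
    · have hD0 : D i = ω := min_eq_right h
      rw [hD0]; ring
  have h3 : nuclearNorm Bhat ≤ ∑ i, t i := by
    rw [hBhat]
    exact nuclear_le hU hV (fun i => le_max_right _ _)
  set X : Matrix (Fin p) (Fin q) ℝ := B - Bhat with hXdef
  have h4 : 0 ≤ Matrix.trace (Xᵀ * X) := trace_tm_nonneg X
  have hXE : Matrix.trace (Xᵀ * E) = Matrix.trace (Bᵀ * E) - Matrix.trace (Bhatᵀ * E) := by
    rw [hXdef, transpose_sub, Matrix.sub_mul, trace_sub]
  have hfro1 : (frobNorm (Bhat - B₀))^2 = Matrix.trace (Eᵀ * E) := by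
    rw [frob_sq]
    have : Bhat - B₀ = -E := by rw [← hE, neg_sub]
    rw [this, transpose_neg, Matrix.neg_mul, Matrix.mul_neg, neg_neg]
  have hfro2 : (frobNorm (B - B₀))^2
      = Matrix.trace (Xᵀ * X) - 2 * Matrix.trace (Xᵀ * E) + Matrix.trace (Eᵀ * E) := by
    rw [frob_sq]
    have hBB : B - B₀ = X - E := by rw [hXdef, ← hE]; abel
    have hmat : (X - E)ᵀ * (X - E) = Xᵀ * X - Xᵀ * E - Eᵀ * X + Eᵀ * E := by
      rw [transpose_sub, Matrix.sub_mul, Matrix.mul_sub Xᵀ, Matrix.mul_sub Eᵀ]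
      abel
    rw [hBB, hmat, trace_add, trace_sub, trace_sub, trace_symm E X]
    ring
  have h5 : ω * nuclearNorm Bhat ≤ ω * ∑ i, t i := mul_le_mul_of_nonneg_left h3 hω
  rw [hfro1, hfro2]
  linarith
end
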